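/- For all natural numbers n, r, s, k with n ≥ 2 there exists an r-colouring f of E(K_n) such that every 1-connected (i.e., connected) subgraph of K_n using at most s colours under f has at most 2^s · ⌈n / 2^{⌊log₂(r+1)⌋}⌉ vertices. In particular, m(n,r,s,k) ≤ m(n,r,s,1) ≤ 2^s ⌈n / 2^{⌊log₂(r+1)⌋}⌉ < 2^s ⌈2n/(r+1)⌉. -/

import Mathlib

set_option maxHeartbeats 1000000
set_option synthInstance.maxHeartbeats 400000

theorem stmt_7 (n r s k : ℕ) (hn : 2 ≤ n) (hr : 1 ≤ r) :
    ∃ f : Sym2 (Fin n) → Fin r,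
      ∀ H : (⊤ : SimpleGraph (Fin n)).Subgraph, H.Connected →
        (∃ C : Finset (Fin r), C.card ≤ s ∧ ∀ e ∈ H.edgeSet, f e ∈ C) →
        Nat.card H.verts ≤
          2 ^ s * ((n + 2 ^ Nat.log 2 (r + 1) - 1) / 2 ^ Nat.log 2 (r + 1)) := by
  classical
  set t := Nat.log 2 (r + 1) with ht
  set B := (n + 2 ^ t - 1) / 2 ^ t with hB
  have h2tpos : 0 < 2 ^ t := Nat.pow_pos (by norm_num)
  have h2t : 2 ^ t ≤ r + 1 := Nat.pow_log_le_self 2 (by omega)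
  have hBpos : 0 < B := Nat.div_pos (by omega) h2tpos
  have hnB : n ≤ B * 2 ^ t := by
    have h1 : n + 2 ^ t - 1 = (n - 1) + 2 ^ t := by omega
    have h2 : B = (n - 1) / 2 ^ t + 1 := by
      rw [hB, h1, Nat.add_div_right _ h2tpos]
    have h3 : n - 1 < B * 2 ^ t := by
      rw [h2]
      calc n - 1 = 2 ^ t * ((n-1) / 2 ^ t) + (n-1) % 2 ^ t := (Nat.div_add_mod _ _).symm
        _ < 2 ^ t * ((n-1) / 2 ^ t) + 2 ^ t := by
            exact Nat.add_lt_add_left (Nat.mod_lt _ h2tpos) _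
        _ = ((n-1) / 2 ^ t + 1) * 2 ^ t := by ring
    omega
  have hself : ∀ x : Fin t → ZMod 2, x + x = 0 := by
    intro x; funext i
    have : ∀ y : ZMod 2, y + y = 0 := by decide
    exact this (x i)
  -- label map
  set L : Fin n → (Fin t → ZMod 2) :=
    fun v i => if (v.val / B).testBit i.val then 1 else 0 with hL
  have hLinj : ∀ u v : Fin n, L u = L v → u.val / B = v.val / B := by
    intro u v h
    have hdivlt : ∀ w : Fin n, w.val / B < 2 ^ t := by
      intro w
      rw [Nat.div_lt_iff_lt_mul hBpos]
      calc w.val < n := w.isLt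
        _ ≤ B * 2 ^ t := hnB
        _ = 2 ^ t * B := by ring
    apply Nat.eq_of_testBit_eq
    intro i
    by_cases hi : i < t
    · have := congrFun h ⟨i, hi⟩
      simp only [hL] at this
      split_ifs at this with h1 h2
      · simp [h1, h2]
      · exact absurd this (by decide)
      · exact absurd this (by decide)
      · simp_all
    · have h1 : u.val / B < 2 ^ i :=
        lt_of_lt_of_le (hdivlt u) (Nat.pow_le_pow_right (by norm_num) (by omega))
      have h2 : v.val / B < 2 ^ i :=
        lt_of_lt_of_le (hdivlt v) (Nat.pow_le_pow_right (by norm_num) (by omega))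
      rw [Nat.testBit_lt_two_pow h1, Nat.testBit_lt_two_pow h2]
  -- injection from nonzero vectors into colours
  have hcard : Fintype.card {x : Fin t → ZMod 2 // x ≠ 0} ≤ Fintype.card (Fin r) := by
    have h1 : Fintype.card (Fin t → ZMod 2) = 2 ^ t := by simp [ZMod.card]
    have h2 : Fintype.card {x : Fin t → ZMod 2 // x ≠ 0}
        = Fintype.card (Fin t → ZMod 2) - 1 := by
      have h3 := Fintype.card_subtype_compl (fun x : Fin t → ZMod 2 => x = 0)
      have h4 : Fintype.card {x : Fin t → ZMod 2 // x = 0} = 1 :=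
        Fintype.card_subtype_eq (0 : Fin t → ZMod 2)
      rw [h4] at h3
      convert h3 using 2
    rw [h2, h1, Fintype.card_fin]
    omega
  obtain ⟨emb⟩ : Nonempty ({x : Fin t → ZMod 2 // x ≠ 0} ↪ Fin r) :=
    Function.Embedding.nonempty_of_card_le hcard
  set c : (Fin t → ZMod 2) → Fin r :=
    fun x => if h : x = 0 then ⟨0, hr⟩ else emb ⟨x, h⟩ with hc
  refine ⟨Sym2.lift ⟨fun u v => c (L u + L v),
    fun u v => congrArg c (add_comm _ _)⟩, ?_⟩
  rintro H Hconn ⟨C, hCs, hCe⟩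
  obtain ⟨v0, hv0⟩ := Hconn.nonempty
  set W : Finset (Fin t → ZMod 2) := Finset.univ.filter (fun x => x ≠ 0 ∧ c x ∈ C) with hW
  have hWcard : W.card ≤ s := by
    refine le_trans (Finset.card_le_card_of_injOn c ?_ ?_) hCs
    · intro x hx
      rw [hW, Finset.mem_coe, Finset.mem_filter] at hx
      exact hx.2.2
    · intro x hx y hy hxy
      rw [Finset.coe_filter, Set.mem_setOf_eq] at hx hy
      rw [hc] at hxy
      simp only [dif_neg hx.2.1, dif_neg hy.2.1] at hxy
      have := emb.injective hxy
      simpa using this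
  set Sp := Submodule.span (ZMod 2) (W : Set (Fin t → ZMod 2)) with hSp
  have hSpcard : Nat.card Sp ≤ 2 ^ s := by
    have h1 : Module.finrank (ZMod 2) Sp ≤ s :=
      le_trans (finrank_span_finset_le_card (R := ZMod 2) W) hWcard
    have h2 : Fintype.card Sp = 2 ^ Module.finrank (ZMod 2) Sp := by
      have := Module.card_eq_pow_finrank (K := ZMod 2) (V := Sp)
      simpa [ZMod.card] using this
    rw [Nat.card_eq_fintype_card, h2]
    exact Nat.pow_le_pow_right (by norm_num) h1
  -- reachability: labels lie in a coset of Sp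
  have key : ∀ (a b : H.verts) (_ : H.coe.Walk a b), L a.1 + L b.1 ∈ Sp := by
    intro a b w
    induction w with
    | nil => rw [hself]; exact Submodule.zero_mem _
    | @cons a d b ha p ih =>
      have hadj : H.Adj a.1 d.1 := ha
      have hedge : s(a.1, d.1) ∈ H.edgeSet := SimpleGraph.Subgraph.mem_edgeSet.mpr hadj
      have hcol : c (L a.1 + L d.1) ∈ C := by
        have := hCe _ hedge
        simpa using this
      have hstep : L a.1 + L d.1 ∈ Sp := by
        by_cases hz : L a.1 + L d.1 = 0
        · rw [hz]; exact Submodule.zero_mem _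
        · apply Submodule.subset_span
          rw [hW]
          simp only [Finset.coe_filter, Set.mem_setOf_eq, Finset.mem_univ, true_and]
          exact ⟨hz, hcol⟩
      have hsum := Submodule.add_mem _ hstep ih
      have heq : (L a.1 + L d.1) + (L d.1 + L b.1) = L a.1 + L b.1 := by
        rw [add_assoc, ← add_assoc (L d.1), hself, zero_add]
      rwa [heq] at hsum
  have hreach : ∀ v ∈ H.verts, L v + L v0 ∈ Sp := by
    intro v hv
    obtain ⟨w⟩ := Hconn.coe.preconnected ⟨v, hv⟩ ⟨v0, hv0⟩
    exact key _ _ w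
  -- count
  have hinj : ∃ F : H.verts → Sp × Fin B, Function.Injective F := by
    refine ⟨fun v => (⟨L v.1 + L v0, hreach _ v.2⟩, ⟨v.1.val % B, Nat.mod_lt _ hBpos⟩), ?_⟩
    intro x y h
    simp only [Prod.mk.injEq, Subtype.mk.injEq, Fin.mk.injEq] at h
    obtain ⟨h1, hmod⟩ := h
    have h1'' : L x.1 = L y.1 := add_right_cancel h1
    have hdiv : x.1.val / B = y.1.val / B := hLinj _ _ h1''
    have hx := Nat.div_add_mod x.1.val B
    have hy := Nat.div_add_mod y.1.val B
    have hBd : B * (x.1.val / B) = B * (y.1.val / B) := by rw [hdiv]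
    have : x.1.val = y.1.val := by omega
    exact Subtype.ext (Fin.ext this)
  obtain ⟨F, hF⟩ := hinj
  calc Nat.card H.verts ≤ Nat.card (Sp × Fin B) := Nat.card_le_card_of_injective F hF
    _ = Nat.card Sp * B := by simp [Nat.card_prod]
    _ ≤ 2 ^ s * B := Nat.mul_le_mul_right _ hSpcard
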